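/- Let n ∈ ℕ with n ≥ 1, let f : (Fin n → Bool) → Bool, and let k be an integer with 1 ≤ k ≤ n. Then MC(Fin n) = min over finite sets K ⊆ Fin n with |K| = k of ( MC(K) + RC(K, Kᶜ) ), where Kᶜ is the complement of K in Fin n. -/

import Mathlib

open Finset

def restrict (n : ℕ) (f : (Fin n → Bool) → Bool) (S : Finset (Fin n)) (b : Fin n → Bool) :
    (Fin n → Bool) → Bool :=
  fun x => f fun i => if i ∈ S then b i else x i

def DependsEssentiallyOn (n : ℕ) (g : (Fin n → Bool) → Bool) (i : Fin n) : Prop :=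
  ∃ x : Fin n → Bool, g x ≠ g (Function.update x i (!x i))

noncomputable def width (n : ℕ) (f : (Fin n → Bool) → Bool) (I : Finset (Fin n)) (i : Fin n) : ℕ :=
  Set.ncard {g : (Fin n → Bool) → Bool | DependsEssentiallyOn n g i ∧ ∃ b, g = restrict n f Iᶜ b}

noncomputable def RC (n : ℕ) (f : (Fin n → Bool) → Bool) (B J : Finset (Fin n)) : ℕ :=
  sInf { c | ∃ σ : Fin J.card ≃ {j // j ∈ J},
    c = ∑ j : Fin J.card,
          width n f (B ∪ (Finset.Iic j).image (fun t => ((σ t : {j // j ∈ J}) : Fin n))) (σ j) }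

noncomputable def MC (n : ℕ) (f : (Fin n → Bool) → Bool) (I : Finset (Fin n)) : ℕ :=
  RC n f ∅ I


noncomputable def cost (n : ℕ) (f : (Fin n → Bool) → Bool) (B J : Finset (Fin n))
    (σ : Fin J.card ≃ {j // j ∈ J}) : ℕ :=
  ∑ j : Fin J.card,
    width n f (B ∪ (Finset.Iic j).image (fun t => ((σ t : {j // j ∈ J}) : Fin n))) (σ j)

lemma RC_eq (n : ℕ) (f : (Fin n → Bool) → Bool) (B J : Finset (Fin n)) :
    RC n f B J = sInf { c | ∃ σ : Fin J.card ≃ {j // j ∈ J}, c = cost n f B J σ } := rfl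

lemma RC_le_cost (n : ℕ) (f : (Fin n → Bool) → Bool) (B J : Finset (Fin n))
    (σ : Fin J.card ≃ {j // j ∈ J}) : RC n f B J ≤ cost n f B J σ := by
  rw [RC_eq]; exact Nat.sInf_le ⟨σ, rfl⟩

lemma exists_cost_eq_RC (n : ℕ) (f : (Fin n → Bool) → Bool) (B J : Finset (Fin n)) :
    ∃ σ : Fin J.card ≃ {j // j ∈ J}, RC n f B J = cost n f B J σ := by
  rw [RC_eq]
  have hne : { c | ∃ σ : Fin J.card ≃ {j // j ∈ J}, c = cost n f B J σ }.Nonempty :=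
    ⟨_, J.equivFin.symm, rfl⟩
  exact Nat.sInf_mem hne

variable {n : ℕ}


def sumComplEquiv (K : Finset (Fin n)) : ({j // j ∈ K} ⊕ {j // j ∈ Kᶜ}) ≃ Fin n where
  toFun := Sum.elim (fun s => s.1) (fun s => s.1)
  invFun i := if h : i ∈ K then .inl ⟨i, h⟩ else .inr ⟨i, Finset.mem_compl.mpr h⟩
  left_inv := by
    rintro (⟨i, hi⟩ | ⟨i, hi⟩)
    · simp [hi]
    · simp [Finset.mem_compl.mp hi]
  right_inv i := by by_cases h : i ∈ K <;> simp [h]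

def univEquiv (n : ℕ) : Fin n ≃ {j // j ∈ (Finset.univ : Finset (Fin n))} :=
  ⟨fun i => ⟨i, Finset.mem_univ i⟩, fun s => s.1, fun _ => rfl, fun _ => rfl⟩

lemma hsum (K : Finset (Fin n)) : K.card + Kᶜ.card = (univ : Finset (Fin n)).card := by
  simp [Finset.card_add_card_compl]

noncomputable def glue (K : Finset (Fin n)) (σ₁ : Fin K.card ≃ {j // j ∈ K})
    (σ₂ : Fin Kᶜ.card ≃ {j // j ∈ Kᶜ}) :
    Fin (univ : Finset (Fin n)).card ≃ {j // j ∈ (univ : Finset (Fin n))} :=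
  (finCongr (hsum K).symm).trans <| finSumFinEquiv.symm.trans <|
    (σ₁.sumCongr σ₂).trans <| (sumComplEquiv K).trans (univEquiv n)

lemma glue_apply_lt (K : Finset (Fin n)) (σ₁ : Fin K.card ≃ {j // j ∈ K})
    (σ₂ : Fin Kᶜ.card ≃ {j // j ∈ Kᶜ}) (t : Fin (univ : Finset (Fin n)).card)
    (h : (t : ℕ) < K.card) :
    ((glue K σ₁ σ₂ t : {j // j ∈ (univ : Finset (Fin n))}) : Fin n) = ((σ₁ ⟨t, h⟩ : _) : Fin n) := by
  have he : (finCongr (hsum K).symm t) = Fin.castAdd Kᶜ.card ⟨t, h⟩ := by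
    apply Fin.ext; rfl
  simp only [glue, Equiv.trans_apply]
  rw [he, finSumFinEquiv_symm_apply_castAdd]
  simp [sumComplEquiv, univEquiv]

lemma glue_apply_ge (K : Finset (Fin n)) (σ₁ : Fin K.card ≃ {j // j ∈ K})
    (σ₂ : Fin Kᶜ.card ≃ {j // j ∈ Kᶜ}) (t : Fin (univ : Finset (Fin n)).card)
    (h : K.card ≤ (t : ℕ)) (h2 : (t : ℕ) - K.card < Kᶜ.card) :
    ((glue K σ₁ σ₂ t : {j // j ∈ (univ : Finset (Fin n))}) : Fin n)
      = ((σ₂ ⟨(t : ℕ) - K.card, h2⟩ : _) : Fin n) := by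
  have he : (finCongr (hsum K).symm t) = Fin.natAdd K.card ⟨(t : ℕ) - K.card, h2⟩ := by
    apply Fin.ext; show (t:ℕ) = K.card + ((t:ℕ) - K.card); omega
  simp only [glue, Equiv.trans_apply]
  rw [he, finSumFinEquiv_symm_apply_natAdd]
  simp [sumComplEquiv, univEquiv]

lemma glue_prefix_lt (K : Finset (Fin n)) (σ₁ : Fin K.card ≃ {j // j ∈ K})
    (σ₂ : Fin Kᶜ.card ≃ {j // j ∈ Kᶜ}) (j : Fin K.card) :
    (Finset.Iic ((finCongr (hsum K)) (Fin.castAdd Kᶜ.card j))).image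
        (fun t => ((glue K σ₁ σ₂ t : _) : Fin n))
      = (Finset.Iic j).image (fun t => ((σ₁ t : _) : Fin n)) := by
  have hval : (((finCongr (hsum K)) (Fin.castAdd Kᶜ.card j)) : ℕ) = (j : ℕ) := by rfl
  ext x
  simp only [mem_image, mem_Iic]
  constructor
  · rintro ⟨s, hs, rfl⟩
    have hs' : (s : ℕ) ≤ (j : ℕ) := by
      have := Fin.le_def.mp hs; omega
    have hlt : (s : ℕ) < K.card := lt_of_le_of_lt hs' j.isLt
    exact ⟨⟨s, hlt⟩, Fin.le_def.mpr hs', (glue_apply_lt K σ₁ σ₂ s hlt).symm⟩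
  · rintro ⟨s, hs, rfl⟩
    have hlt : (s : ℕ) < (univ : Finset (Fin n)).card := by
      have := hsum K; have := s.isLt; omega
    refine ⟨⟨(s : ℕ), hlt⟩, Fin.le_def.mpr (by rw [hval]; exact Fin.le_def.mp hs), ?_⟩
    rw [glue_apply_lt K σ₁ σ₂ ⟨(s : ℕ), hlt⟩ (by simpa using s.isLt)]

lemma glue_prefix_ge (K : Finset (Fin n)) (σ₁ : Fin K.card ≃ {j // j ∈ K})
    (σ₂ : Fin Kᶜ.card ≃ {j // j ∈ Kᶜ}) (j : Fin Kᶜ.card) :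
    (Finset.Iic ((finCongr (hsum K)) (Fin.natAdd K.card j))).image
        (fun t => ((glue K σ₁ σ₂ t : _) : Fin n))
      = K ∪ (Finset.Iic j).image (fun t => ((σ₂ t : _) : Fin n)) := by
  have hval : (((finCongr (hsum K)) (Fin.natAdd K.card j)) : ℕ) = K.card + (j : ℕ) := by rfl
  ext x
  simp only [mem_image, mem_Iic, mem_union]
  constructor
  · rintro ⟨s, hs, rfl⟩
    have hs' : (s : ℕ) ≤ K.card + (j : ℕ) := by
      have := Fin.le_def.mp hs; omega
    by_cases hc : (s : ℕ) < K.card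
    · left
      rw [glue_apply_lt K σ₁ σ₂ s hc]
      exact (σ₁ ⟨s, hc⟩).2
    · right
      push_neg at hc
      have hb : (s : ℕ) - K.card < Kᶜ.card := by
        have := hsum K; have := s.isLt; omega
      exact ⟨⟨(s : ℕ) - K.card, hb⟩, Fin.le_def.mpr (by simp; omega),
        (glue_apply_ge K σ₁ σ₂ s hc hb).symm⟩
  · rintro (hx | ⟨s, hs, rfl⟩)
    · set s : Fin K.card := σ₁.symm ⟨x, hx⟩ with hsdef
      have hlt : (s : ℕ) < (univ : Finset (Fin n)).card := by
        have := hsum K; have := s.isLt; omega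
      refine ⟨⟨(s : ℕ), hlt⟩, Fin.le_def.mpr (by rw [hval]; dsimp only; omega), ?_⟩
      rw [glue_apply_lt K σ₁ σ₂ ⟨(s : ℕ), hlt⟩ (by simpa using s.isLt)]
      have : (⟨(s : ℕ), by simpa using s.isLt⟩ : Fin K.card) = s := Fin.ext rfl
      rw [this, hsdef, Equiv.apply_symm_apply]
    · have hlt : K.card + (s : ℕ) < (univ : Finset (Fin n)).card := by
        have := hsum K; have := s.isLt; omega
      have hb : (K.card + (s : ℕ)) - K.card < Kᶜ.card := by simpa using s.isLt
      refine ⟨⟨K.card + (s : ℕ), hlt⟩, Fin.le_def.mpr (by rw [hval]; have := Fin.le_def.mp hs; dsimp only; omega), ?_⟩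
      rw [glue_apply_ge K σ₁ σ₂ ⟨K.card + (s : ℕ), hlt⟩ (by simp) hb]
      congr 1
      exact congrArg _ (Fin.ext (by simp))

lemma glue_cost (f : (Fin n → Bool) → Bool) (K : Finset (Fin n))
    (σ₁ : Fin K.card ≃ {j // j ∈ K}) (σ₂ : Fin Kᶜ.card ≃ {j // j ∈ Kᶜ}) :
    cost n f ∅ univ (glue K σ₁ σ₂) = cost n f ∅ K σ₁ + cost n f K Kᶜ σ₂ := by
  unfold cost
  rw [← Equiv.sum_comp (finCongr (hsum K))
    (fun j => width n f (∅ ∪ (Finset.Iic j).image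
      (fun t => ((glue K σ₁ σ₂ t : _) : Fin n))) (glue K σ₁ σ₂ j))]
  rw [Fin.sum_univ_add]
  congr 1
  · refine Finset.sum_congr rfl fun j _ => ?_
    have h1 := glue_prefix_lt K σ₁ σ₂ j
    have hlt : (((finCongr (hsum K)) (Fin.castAdd Kᶜ.card j)) : ℕ) < K.card := by
      exact j.isLt
    have h2 := glue_apply_lt K σ₁ σ₂ ((finCongr (hsum K)) (Fin.castAdd Kᶜ.card j)) hlt
    have h3 : (⟨(((finCongr (hsum K)) (Fin.castAdd Kᶜ.card j)) : ℕ), hlt⟩ : Fin K.card) = j :=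
      Fin.ext rfl
    rw [h1, h2, h3]
  · refine Finset.sum_congr rfl fun j _ => ?_
    have h1 := glue_prefix_ge K σ₁ σ₂ j
    have hge : K.card ≤ (((finCongr (hsum K)) (Fin.natAdd K.card j)) : ℕ) := by
      show K.card ≤ K.card + (j:ℕ); omega
    have hb : (((finCongr (hsum K)) (Fin.natAdd K.card j)) : ℕ) - K.card < Kᶜ.card := by
      have := j.isLt; show K.card + (j:ℕ) - K.card < Kᶜ.card; omega
    have h2 := glue_apply_ge K σ₁ σ₂ ((finCongr (hsum K)) (Fin.natAdd K.card j)) hge hb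
    have h3 : (⟨(((finCongr (hsum K)) (Fin.natAdd K.card j)) : ℕ) - K.card, hb⟩ : Fin Kᶜ.card)
        = j := Fin.ext (by show K.card + (j:ℕ) - K.card = j; omega)
    rw [h1, h2, h3, Finset.empty_union]


section Decompose

variable (k : ℕ) (σ : Fin (univ : Finset (Fin n)).card ≃ {j // j ∈ (univ : Finset (Fin n))})

lemma card_univ_fin : (univ : Finset (Fin n)).card = n := by simp

/-- The set of the first `k` variables read by `σ`. -/
def Kof : Finset (Fin n) :=
  ((univ : Finset (Fin (univ : Finset (Fin n)).card)).filter
      (fun j : Fin (univ : Finset (Fin n)).card => (j : ℕ) < k)).image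
    (fun j => ((σ j : _) : Fin n))

lemma subtype_eta (s : {j // j ∈ (univ : Finset (Fin n))}) :
    (⟨(s : Fin n), Finset.mem_univ _⟩ : {j // j ∈ (univ : Finset (Fin n))}) = s :=
  Subtype.ext rfl

lemma Kof_mem (i : Fin n) :
    i ∈ Kof k σ ↔ ((σ.symm ⟨i, Finset.mem_univ i⟩ : Fin _) : ℕ) < k := by
  simp only [Kof, mem_image, mem_filter, mem_univ, true_and]
  constructor
  · rintro ⟨j, hj, rfl⟩
    rw [subtype_eta, Equiv.symm_apply_apply]
    exact hj
  · intro h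
    exact ⟨σ.symm ⟨i, Finset.mem_univ i⟩, h, by rw [Equiv.apply_symm_apply]⟩

lemma Kof_card (hk : k ≤ n) : (Kof k σ).card = k := by
  rw [Kof, Finset.card_image_of_injective _ (fun a b h => σ.injective (Subtype.ext h))]
  have : ((univ : Finset (Fin (univ : Finset (Fin n)).card)).filter
      (fun j : Fin (univ : Finset (Fin n)).card => (j : ℕ) < k))
      = (univ : Finset (Fin k)).map ⟨Fin.castLE (by rw [card_univ_fin]; exact hk), Fin.castLE_injective _⟩ := by
    ext x
    simp only [mem_filter, mem_univ, true_and, mem_map, Function.Embedding.coeFn_mk]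
    constructor
    · intro h
      exact ⟨⟨(x : ℕ), h⟩, Fin.ext rfl⟩
    · rintro ⟨y, rfl⟩
      exact y.isLt
  rw [this, Finset.card_map, Finset.card_univ, Fintype.card_fin]

variable (hk : k ≤ n)

/-- Restriction of `σ` to its first `k` positions, as an ordering of `Kof k σ`. -/
noncomputable def sig1 : Fin (Kof k σ).card ≃ {j // j ∈ Kof k σ} where
  toFun j := ⟨((σ ⟨(j : ℕ), by
      have h1 := j.isLt; have h2 := Kof_card k σ hk
      have h3 := card_univ_fin (n := n); omega⟩ : _) : Fin n), by
    rw [Kof_mem, subtype_eta, Equiv.symm_apply_apply]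
    show (j : ℕ) < k
    have h1 := j.isLt; have h2 := Kof_card k σ hk; omega⟩
  invFun s := ⟨((σ.symm ⟨(s : Fin n), Finset.mem_univ _⟩ : Fin _) : ℕ), by
    rw [Kof_card k σ hk]; exact (Kof_mem k σ _).mp s.2⟩
  left_inv j := by
    apply Fin.ext
    simp only [subtype_eta, Equiv.symm_apply_apply]
  right_inv s := by
    apply Subtype.ext
    simp only [Fin.eta, Equiv.apply_symm_apply]
  
/-- Restriction of `σ` to its last `n - k` positions, as an ordering of `(Kof k σ)ᶜ`. -/
noncomputable def sig2 : Fin (Kof k σ)ᶜ.card ≃ {j // j ∈ (Kof k σ)ᶜ} where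
  toFun j := ⟨((σ ⟨k + (j : ℕ), by
      have h1 := j.isLt
      have h2 := Kof_card k σ hk; have h3 := hsum (Kof k σ)
      have h4 := card_univ_fin (n := n); omega⟩ : _) : Fin n), by
    rw [Finset.mem_compl, Kof_mem, subtype_eta, Equiv.symm_apply_apply]
    simp⟩
  invFun s := ⟨((σ.symm ⟨(s : Fin n), Finset.mem_univ _⟩ : Fin _) : ℕ) - k, by
    have h1 : ((σ.symm ⟨(s : Fin n), Finset.mem_univ _⟩ : Fin _) : ℕ)
        < (univ : Finset (Fin n)).card := Fin.is_lt _
    have h2 := Kof_card k σ hk; have h3 := hsum (Kof k σ)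
    have h4 := card_univ_fin (n := n)
    have h5 := Finset.mem_compl.mp s.2
    rw [Kof_mem] at h5
    omega⟩
  left_inv j := by
    apply Fin.ext
    simp only [subtype_eta, Equiv.symm_apply_apply]
    omega
  right_inv s := by
    have hge : k ≤ ((σ.symm ⟨(s : Fin n), Finset.mem_univ _⟩ : Fin _) : ℕ) := by
      have := Finset.mem_compl.mp s.2
      rw [Kof_mem] at this
      omega
    apply Subtype.ext
    show ((σ ⟨k + (((σ.symm ⟨(s : Fin n), Finset.mem_univ _⟩ : Fin _) : ℕ) - k), _⟩ : _) : Fin n)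
      = (s : Fin n)
    have : (⟨k + (((σ.symm ⟨(s : Fin n), Finset.mem_univ _⟩ : Fin _) : ℕ) - k), by
        have h1 := (σ.symm ⟨(s : Fin n), Finset.mem_univ _⟩).isLt; omega⟩ :
        Fin (univ : Finset (Fin n)).card) = σ.symm ⟨(s : Fin n), Finset.mem_univ _⟩ :=
      Fin.ext (by dsimp only; omega)
    rw [this, Equiv.apply_symm_apply]

lemma glue_sig : glue (Kof k σ) (sig1 k σ hk) (sig2 k σ hk) = σ := by
  apply Equiv.ext
  intro t
  apply Subtype.ext
  by_cases h : (t : ℕ) < (Kof k σ).card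
  · rw [glue_apply_lt (Kof k σ) _ _ t h]
    show ((σ ⟨((⟨(t : ℕ), h⟩ : Fin (Kof k σ).card) : ℕ), _⟩ : _) : Fin n) = _
    exact congrArg _ (congrArg _ (Fin.ext rfl))
  · push_neg at h
    have hb : (t : ℕ) - (Kof k σ).card < (Kof k σ)ᶜ.card := by
      have := hsum (Kof k σ); have := t.isLt; omega
    rw [glue_apply_ge (Kof k σ) _ _ t h hb]
    show ((σ ⟨k + ((t : ℕ) - (Kof k σ).card), _⟩ : _) : Fin n) = _
    congr 1
    apply congrArg
    apply Fin.ext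
    show k + ((t : ℕ) - (Kof k σ).card) = (t : ℕ)
    rw [Kof_card k σ hk] at h ⊢
    omega

end Decompose

/-- Divide and conquer for the full variable set: for `1 ≤ k ≤ n`,
`MC([n]) = min_{K ⊆ [n], |K| = k} (MC(K) + RC(K, Kᶜ))`. -/
theorem stmt_4 (n : ℕ) (hn : 1 ≤ n) (f : (Fin n → Bool) → Bool) (k : ℕ)
    (hk1 : 1 ≤ k) (hk2 : k ≤ n) :
    MC n f Finset.univ
      = ((Finset.univ : Finset (Fin n)).powersetCard k).inf'
          (Finset.powersetCard_nonempty.mpr (by simpa using hk2))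
          (fun K => MC n f K + RC n f K Kᶜ) := by
  apply le_antisymm
  · apply Finset.le_inf'
    intro K _
    obtain ⟨σ₁, h1⟩ := exists_cost_eq_RC n f ∅ K
    obtain ⟨σ₂, h2⟩ := exists_cost_eq_RC n f K Kᶜ
    calc MC n f univ ≤ cost n f ∅ univ (glue K σ₁ σ₂) := RC_le_cost n f ∅ univ _
      _ = cost n f ∅ K σ₁ + cost n f K Kᶜ σ₂ := glue_cost f K σ₁ σ₂
      _ = MC n f K + RC n f K Kᶜ := by rw [MC, ← h1, ← h2]
  · obtain ⟨σ, hσ⟩ := exists_cost_eq_RC n f ∅ univ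
    have hKmem : Kof k σ ∈ (univ : Finset (Fin n)).powersetCard k :=
      Finset.mem_powersetCard.mpr ⟨Finset.subset_univ _, Kof_card k σ hk2⟩
    refine le_trans (Finset.inf'_le _ hKmem) ?_
    have hg := glue_cost f (Kof k σ) (sig1 k σ hk2) (sig2 k σ hk2)
    rw [glue_sig k σ hk2] at hg
    calc MC n f (Kof k σ) + RC n f (Kof k σ) (Kof k σ)ᶜ
        ≤ cost n f ∅ (Kof k σ) (sig1 k σ hk2) + cost n f (Kof k σ) (Kof k σ)ᶜ (sig2 k σ hk2) :=
          Nat.add_le_add (RC_le_cost n f ∅ _ _) (RC_le_cost n f _ _ _)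
      _ = cost n f ∅ univ σ := hg.symm
      _ = MC n f univ := hσ.symm
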